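/- For fixed z ∈ ℝ and q = e^{-ε}, lim_{ε→0⁺} Π_{k=1}^∞ (1 + e^{-εk}·εz) = e^z. -/

import Mathlib

open Filter Topology

private lemma log_bounds13 {t : ℝ} (ht : |t| ≤ 1/2) :
    t - 2*t^2 ≤ Real.log (1+t) ∧ Real.log (1+t) ≤ t := by
  obtain ⟨h1, h2⟩ := abs_le.1 ht
  have h0 : (0:ℝ) < 1 + t := by linarith
  refine ⟨?_, by linarith [Real.log_le_sub_one_of_pos h0]⟩
  have hlow := Real.one_sub_inv_le_log_of_pos h0
  have hinv : 1 - (1+t)⁻¹ = t/(1+t) := by field_simp; ring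
  have hq : t - 2*t^2 ≤ t/(1+t) := by
    rw [le_div_iff₀ h0]
    nlinarith [mul_nonneg (sq_nonneg t) (by linarith : (0:ℝ) ≤ 1+2*t)]
  linarith [hinv ▸ hlow]

private lemma prod_bounds13 (z : ℝ) {ε : ℝ} (hε : 0 < ε) (hz : |ε*z| ≤ 1/2) :
    Real.exp (ε*z*Real.exp (-ε)*(1-Real.exp (-ε))⁻¹
        - 2*((ε*z)^2*(Real.exp (-ε))^2*(1-(Real.exp (-ε))^2)⁻¹))
      ≤ (∏' k : ℕ, (1 + Real.exp (-(ε * ((k:ℝ) + 1))) * (ε * z))) ∧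
    (∏' k : ℕ, (1 + Real.exp (-(ε * ((k:ℝ) + 1))) * (ε * z)))
      ≤ Real.exp (ε*z*Real.exp (-ε)*(1-Real.exp (-ε))⁻¹) := by
  set r : ℝ := Real.exp (-ε) with hr
  have hr0 : 0 < r := Real.exp_pos _
  have hr1 : r < 1 := by
    rw [hr, ← Real.exp_zero]
    exact Real.exp_lt_exp.2 (by linarith)
  set t : ℕ → ℝ := fun k => r ^ (k+1) * (ε*z) with htdef
  have hfact : ∀ k : ℕ, Real.exp (-(ε * ((k:ℝ)+1))) * (ε*z) = t k := by
    intro k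
    have : (-(ε * ((k:ℝ)+1))) = ((k+1 : ℕ) : ℝ) * (-ε) := by push_cast; ring
    rw [this, Real.exp_nat_mul]
  have habs : ∀ k : ℕ, |t k| ≤ 1/2 := by
    intro k
    have h1 : |t k| = r^(k+1) * |ε*z| := by
      rw [abs_mul, abs_pow, abs_of_pos hr0]
    have h2 : r^(k+1) ≤ 1 := pow_le_one₀ hr0.le hr1.le
    calc |t k| = r^(k+1) * |ε*z| := h1
      _ ≤ 1 * (1/2) := by
          exact mul_le_mul h2 hz (abs_nonneg _) zero_le_one
      _ = 1/2 := by norm_num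
  have hpos : ∀ k : ℕ, 0 < 1 + t k := by
    intro k
    have := (abs_le.1 (habs k)).1
    linarith
  have hsum_t : Summable t :=
    (((summable_geometric_of_lt_one hr0.le hr1).mul_left r).mul_right (ε*z)).congr
      (fun k => by simp only [htdef]; ring)
  have hr2 : r^2 < 1 := by nlinarith
  have hsum_t2 : Summable (fun k => (t k)^2) :=
    (((summable_geometric_of_lt_one (by positivity) hr2).mul_left (r^2)).mul_right
        ((ε*z)^2)).congr (fun k => by simp only [htdef]; ring)
  have htsum_t : ∑' k, t k = ε*z*r*(1-r)⁻¹ := by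
    have h1 : ∑' k, t k = (r*(ε*z)) * ∑' k : ℕ, r^k := by
      rw [← tsum_mul_left]; exact tsum_congr fun k => by simp only [htdef]; ring
    rw [h1, tsum_geometric_of_lt_one hr0.le hr1]; ring
  have htsum_t2 : ∑' k, (t k)^2 = (ε*z)^2*r^2*(1-r^2)⁻¹ := by
    have h1 : ∑' k, (t k)^2 = (r^2*(ε*z)^2) * ∑' k : ℕ, (r^2)^k := by
      rw [← tsum_mul_left]; exact tsum_congr fun k => by simp only [htdef]; ring
    rw [h1, tsum_geometric_of_lt_one (by positivity) hr2]; ring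
  have hsum_log : Summable (fun k => Real.log (1 + t k)) := by
    have hb : ∀ k : ℕ, |Real.log (1 + t k)| ≤ 2 * |t k| := by
      intro k
      obtain ⟨hl, hu⟩ := log_bounds13 (habs k)
      have h1 := (abs_le.1 (habs k)).1
      have h2 := le_abs_self (t k)
      have h3 := neg_abs_le (t k)
      have h4 : (t k)^2 ≤ |t k| * (1/2) := by
        rw [sq, ← abs_mul_abs_self]
        exact mul_le_mul_of_nonneg_left (habs k) (abs_nonneg _)
      rw [abs_le]
      constructor <;> nlinarith
    have hS : Summable (fun k => |Real.log (1 + t k)|) :=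
      Summable.of_nonneg_of_le (fun k => abs_nonneg _) hb (hsum_t.abs.mul_left 2)
    exact hS.of_abs
  have hprod : HasProd (fun k => 1 + t k) (Real.exp (∑' k, Real.log (1 + t k))) := by
    have h := hsum_log.hasSum.rexp
    have h2 : (Real.exp ∘ fun k => Real.log (1 + t k)) = fun k => 1 + t k :=
      funext fun k => by simp [Function.comp, Real.exp_log (hpos k)]
    rwa [h2] at h
  have hPeq : (∏' k : ℕ, (1 + Real.exp (-(ε * ((k:ℝ) + 1))) * (ε * z)))
      = Real.exp (∑' k, Real.log (1 + t k)) := by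
    rw [show (fun k : ℕ => 1 + Real.exp (-(ε * ((k:ℝ) + 1))) * (ε * z))
        = fun k => 1 + t k from funext fun k => by rw [hfact]]
    exact hprod.tprod_eq
  have hup : ∑' k, Real.log (1 + t k) ≤ ε*z*r*(1-r)⁻¹ := by
    rw [← htsum_t]
    exact Summable.tsum_le_tsum (fun k => (log_bounds13 (habs k)).2) hsum_log hsum_t
  have hlow : ε*z*r*(1-r)⁻¹ - 2*((ε*z)^2*r^2*(1-r^2)⁻¹) ≤ ∑' k, Real.log (1 + t k) := by
    have h1 : ∑' k, (t k - 2*(t k)^2) = ε*z*r*(1-r)⁻¹ - 2*((ε*z)^2*r^2*(1-r^2)⁻¹) := by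
      rw [Summable.tsum_sub hsum_t (hsum_t2.mul_left 2), tsum_mul_left, htsum_t, htsum_t2]
    rw [← h1]
    exact Summable.tsum_le_tsum (fun k => (log_bounds13 (habs k)).1)
      (hsum_t.sub (hsum_t2.mul_left 2)) hsum_log
  rw [hPeq]
  exact ⟨Real.exp_le_exp.2 hlow, Real.exp_le_exp.2 hup⟩

private lemma slope_lim13 {c : ℝ} (hc : c ≠ 0) :
    Tendsto (fun ε : ℝ => ε * (1 - Real.exp (-(c*ε)))⁻¹) (𝓝[>] 0) (𝓝 c⁻¹) := by
  have hd : HasDerivAt (fun x : ℝ => 1 - Real.exp (-(c*x))) c 0 := by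
    have h1 : HasDerivAt (fun x : ℝ => -(c*x)) (-c) 0 := by
      have h := ((hasDerivAt_id' (0:ℝ)).const_mul c).neg; rwa [mul_one] at h
    have h2 := (Real.hasDerivAt_exp (-(c*0))).comp 0 h1
    have h3 := h2.const_sub 1
    simpa using h3
  have hs := hasDerivAt_iff_tendsto_slope.1 hd
  have hs2 : Tendsto (fun ε : ℝ => (1 - Real.exp (-(c*ε)))/ε) (𝓝[>] 0) (𝓝 c) := by
    have hmono : 𝓝[>] (0:ℝ) ≤ 𝓝[≠] 0 :=
      nhdsWithin_mono 0 (fun x hx => ne_of_gt hx)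
    refine (hs.mono_left hmono).congr fun ε => ?_
    simp [slope_def_field]
  have := hs2.inv₀ hc
  refine this.congr fun ε => ?_
  rw [inv_div, div_eq_mul_inv]

theorem stmt_13 (z : ℝ) :
    Tendsto (fun ε : ℝ => ∏' k : ℕ, (1 + Real.exp (-(ε * ((k : ℝ) + 1))) * (ε * z)))
      (𝓝[>] 0) (𝓝 (Real.exp z)) := by
  have hid : Tendsto (fun ε : ℝ => ε) (𝓝[>] (0:ℝ)) (𝓝 0) :=
    tendsto_id.mono_left nhdsWithin_le_nhds
  have hexp : Tendsto (fun ε : ℝ => Real.exp (-ε)) (𝓝[>] (0:ℝ)) (𝓝 1) := by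
    have hc : Continuous (fun ε : ℝ => Real.exp (-ε)) := by continuity
    have h := hc.tendsto 0
    simp only [neg_zero, Real.exp_zero] at h
    exact h.mono_left nhdsWithin_le_nhds
  have h1 : Tendsto (fun ε : ℝ => ε * (1 - Real.exp (-ε))⁻¹) (𝓝[>] (0:ℝ)) (𝓝 1) := by
    have := slope_lim13 (c := 1) one_ne_zero
    simpa using this
  have h2 : Tendsto (fun ε : ℝ => ε * (1 - Real.exp (-(2*ε)))⁻¹) (𝓝[>] (0:ℝ)) (𝓝 2⁻¹) :=
    slope_lim13 two_ne_zero
  -- limit of S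
  have hS : Tendsto (fun ε : ℝ => ε*z*Real.exp (-ε)*(1-Real.exp (-ε))⁻¹)
      (𝓝[>] (0:ℝ)) (𝓝 z) := by
    have h := (hexp.mul h1).const_mul z
    have h' : Tendsto (fun ε : ℝ => z * (Real.exp (-ε) * (ε * (1-Real.exp (-ε))⁻¹)))
        (𝓝[>] (0:ℝ)) (𝓝 z) := by simpa using h
    exact h'.congr fun ε => by ring
  -- limit of T
  have hT : Tendsto (fun ε : ℝ => (ε*z)^2*(Real.exp (-ε))^2*(1-(Real.exp (-ε))^2)⁻¹)
      (𝓝[>] (0:ℝ)) (𝓝 0) := by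
    have hexp2 : Tendsto (fun ε : ℝ => Real.exp (-(2*ε))) (𝓝[>] (0:ℝ)) (𝓝 1) := by
      have hc : Continuous (fun ε : ℝ => Real.exp (-(2*ε))) := by continuity
      have h := hc.tendsto 0
      simp only [mul_zero, neg_zero, Real.exp_zero] at h
      exact h.mono_left nhdsWithin_le_nhds
    have h := ((hid.mul hexp2).mul h2).const_mul (z^2)
    have h' : Tendsto (fun ε : ℝ => z^2 * ((ε * Real.exp (-(2*ε))) * (ε * (1 - Real.exp (-(2*ε)))⁻¹)))
        (𝓝[>] (0:ℝ)) (𝓝 0) := by simpa using h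
    refine h'.congr fun ε => ?_
    have hsq : (Real.exp (-ε))^2 = Real.exp (-(2*ε)) := by
      rw [sq, ← Real.exp_add]; ring_nf
    rw [hsq]; ring
  -- squeeze
  have hL : Tendsto (fun ε : ℝ => Real.exp (ε*z*Real.exp (-ε)*(1-Real.exp (-ε))⁻¹
      - 2*((ε*z)^2*(Real.exp (-ε))^2*(1-(Real.exp (-ε))^2)⁻¹)))
      (𝓝[>] (0:ℝ)) (𝓝 (Real.exp z)) := by
    have := (hS.sub (hT.const_mul 2)).rexp
    simpa using this
  have hU : Tendsto (fun ε : ℝ => Real.exp (ε*z*Real.exp (-ε)*(1-Real.exp (-ε))⁻¹))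
      (𝓝[>] (0:ℝ)) (𝓝 (Real.exp z)) := hS.rexp
  have hδ : (0:ℝ) < 1/(2*(|z|+1)) := by positivity
  have hmem : Set.Ioo (0:ℝ) (1/(2*(|z|+1))) ∈ 𝓝[>] (0:ℝ) :=
    Ioo_mem_nhdsGT_of_mem ⟨le_refl 0, hδ⟩
  refine tendsto_of_tendsto_of_tendsto_of_le_of_le' hL hU ?_ ?_ <;>
    · filter_upwards [hmem] with ε hε
      obtain ⟨hε0, hεδ⟩ := hε
      have hz : |ε*z| ≤ 1/2 := by
        rw [abs_mul, abs_of_pos hε0]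
        have hz0 : (0:ℝ) ≤ |z| := abs_nonneg z
        have h := (lt_div_iff₀ (by positivity : (0:ℝ) < 2*(|z|+1))).1 hεδ
        nlinarith
      first
        | exact (prod_bounds13 z hε0 hz).1
        | exact (prod_bounds13 z hε0 hz).2
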